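/- Let k = 2ℓ+1 be odd and F the k-dimensional Lyness map with a ≥ 0. Then the measure m_2(B) = ∫_B dx/(x_1 x_2 ··· x_k) is invariant under F∘F: m_2(F²(B)) = m_2(B) for every measurable B ⊆ Q⁺. -/

import Mathlib

open MeasureTheory
namespace Lyness13

noncomputable def mat (l : ℕ) (a : ℝ) (x : Fin (2 * l + 1) → ℝ) :
    Matrix (Fin (2 * l + 1)) (Fin (2 * l + 1)) ℝ :=
  fun i j =>
    if (i : ℕ) + 1 < 2 * l + 1 then (if (j : ℕ) = (i : ℕ) + 1 then 1 else 0)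
    else if (j : ℕ) = 0 then -((a + (∑ m, x m) - x 0) / (x 0) ^ 2) else (x 0)⁻¹

noncomputable def Fd (l : ℕ) (a : ℝ) (x : Fin (2 * l + 1) → ℝ) :
    (Fin (2 * l + 1) → ℝ) →L[ℝ] (Fin (2 * l + 1) → ℝ) :=
  LinearMap.toContinuousLinearMap (Matrix.toLin' (mat l a x))

lemma Fd_det (l : ℕ) (a : ℝ) (x : Fin (2 * l + 1) → ℝ) :
    (Fd l a x).det = (mat l a x).det := by
  show LinearMap.det _ = _
  rw [Fd, LinearMap.coe_toContinuousLinearMap, LinearMap.det_toLin']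

lemma Fd_apply (l : ℕ) (a : ℝ) (x v : Fin (2 * l + 1) → ℝ) (i : Fin (2 * l + 1)) :
    Fd l a x v i = ∑ j, mat l a x i j * v j := by
  simp [Fd, Matrix.toLin'_apply, Matrix.mulVec, dotProduct]

lemma hasFDerivAt_F (l : ℕ) (a : ℝ)
    (F : (Fin (2 * l + 1) → ℝ) → (Fin (2 * l + 1) → ℝ))
    (hF : ∀ x : Fin (2 * l + 1) → ℝ, ∀ i : Fin (2 * l + 1),
      F x i = if h : (i : ℕ) + 1 < 2 * l + 1 then x ⟨(i : ℕ) + 1, h⟩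
              else (a + (∑ j, x j) - x ⟨0, Nat.succ_pos _⟩) / x ⟨0, Nat.succ_pos _⟩)
    (x : Fin (2 * l + 1) → ℝ) (hx : x 0 ≠ 0) :
    HasFDerivAt F (Fd l a x) x := by
  have h0 : (⟨0, Nat.succ_pos _⟩ : Fin (2 * l + 1)) = 0 := by ext; simp
  apply hasFDerivAt_pi''
  intro i
  by_cases h : (i : ℕ) + 1 < 2 * l + 1
  · have heq : (fun y : Fin (2 * l + 1) → ℝ => F y i) = fun y => y ⟨(i : ℕ) + 1, h⟩ := by
      funext y; rw [hF y i, dif_pos h]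
    rw [heq]
    have hkey : (ContinuousLinearMap.proj i).comp (Fd l a x)
        = (ContinuousLinearMap.proj (⟨(i : ℕ) + 1, h⟩ : Fin (2 * l + 1))
            : (Fin (2 * l + 1) → ℝ) →L[ℝ] ℝ) := by
      ext v
      simp only [ContinuousLinearMap.comp_apply, ContinuousLinearMap.proj_apply, Fd_apply]
      have : ∀ j : Fin (2 * l + 1), mat l a x i j * v j
          = if j = (⟨(i : ℕ) + 1, h⟩ : Fin (2 * l + 1)) then v j else 0 := by
        intro j
        simp only [mat, if_pos h]
        by_cases hj : j = (⟨(i : ℕ) + 1, h⟩ : Fin (2 * l + 1))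
        · rw [if_pos hj, if_pos (by rw [hj]), one_mul]
        · rw [if_neg hj, if_neg (by intro hc; exact hj (Fin.ext hc)), zero_mul]
      rw [Finset.sum_congr rfl fun j _ => this j]
      simp
    rw [hkey]
    exact hasFDerivAt_apply _ x
  · have heq : (fun y : Fin (2 * l + 1) → ℝ => F y i)
        = fun y => (a + (∑ m, y m) - y 0) * (y 0)⁻¹ := by
      funext y; rw [hF y i, dif_neg h, h0, div_eq_mul_inv]
    rw [heq]
    have hu : HasFDerivAt (fun y : Fin (2 * l + 1) → ℝ => a + (∑ m, y m) - y 0)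
        ((∑ m, (ContinuousLinearMap.proj m : (Fin (2 * l + 1) → ℝ) →L[ℝ] ℝ))
          - (ContinuousLinearMap.proj (0 : Fin (2 * l + 1))
              : (Fin (2 * l + 1) → ℝ) →L[ℝ] ℝ)) x := by
      have h1 : HasFDerivAt (fun y : Fin (2 * l + 1) → ℝ => ∑ m, y m)
          ((∑ m, ContinuousLinearMap.proj m) : (Fin (2 * l + 1) → ℝ) →L[ℝ] ℝ) x :=
        HasFDerivAt.fun_sum fun m _ => hasFDerivAt_apply m x
      have h2 := ((h1.const_add a).fun_sub (hasFDerivAt_apply 0 x))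
      simpa using h2
    have hw : HasFDerivAt (fun y : Fin (2 * l + 1) → ℝ => (y 0)⁻¹)
        ((-((x 0) ^ 2)⁻¹) • (ContinuousLinearMap.proj 0
          : (Fin (2 * l + 1) → ℝ) →L[ℝ] ℝ)) x :=
      (hasDerivAt_inv hx).comp_hasFDerivAt x (hasFDerivAt_apply 0 x)
    have hmul := hu.fun_mul hw
    refine hmul.congr_fderiv ?_
    symm
    ext v
    simp only [ContinuousLinearMap.comp_apply, ContinuousLinearMap.proj_apply,
      ContinuousLinearMap.add_apply, ContinuousLinearMap.coe_smul', Pi.smul_apply,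
      ContinuousLinearMap.coe_sub', Pi.sub_apply, ContinuousLinearMap.coe_sum',
      Finset.sum_apply, smul_eq_mul, Fd_apply]
    have hsum : ∀ w : Fin (2 * l + 1) → ℝ, (∑ m, w m) = w 0 + ∑ m : Fin (2 * l), w m.succ :=
      fun w => Fin.sum_univ_succ w
    have hrow : ∀ j : Fin (2 * l + 1), mat l a x i j
        = if (j : ℕ) = 0 then -((a + (∑ m, x m) - x 0) / (x 0) ^ 2) else (x 0)⁻¹ := by
      intro j; simp only [mat, if_neg h]
    rw [Finset.sum_congr rfl fun j _ => by rw [hrow j]]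
    rw [Fin.sum_univ_succ]
    simp only [Fin.val_zero, Fin.val_succ, Nat.succ_ne_zero, if_true, if_false, reduceIte]
    rw [← Finset.mul_sum, hsum v]
    field_simp
    ring

lemma mat_det (l : ℕ) (a : ℝ) (x : Fin (2 * l + 1) → ℝ) :
    (mat l a x).det = -((a + (∑ m, x m) - x 0) / (x 0) ^ 2) := by
  set σ : Equiv.Perm (Fin (2 * l + 1)) := finRotate (2 * l + 1) with hσ
  have hinv : ∀ i : Fin (2 * l + 1), σ⁻¹ i = i - 1 := by
    intro i
    have : σ (i - 1) = i := by
      simp [hσ, finRotate_succ_apply, sub_add_cancel]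
    rw [Equiv.Perm.inv_eq_iff_eq]; exact this.symm
  have hA : ((mat l a x).submatrix (⇑σ⁻¹) id).det
      = Equiv.Perm.sign σ⁻¹ * (mat l a x).det := Matrix.det_permute _ _
  have hsign : (Equiv.Perm.sign σ⁻¹ : ℤˣ) = 1 := by
    rw [Equiv.Perm.sign_inv, hσ, sign_finRotate]
    simp [pow_mul]
  have htri : ((mat l a x).submatrix (⇑σ⁻¹) id).BlockTriangular id := by
    intro i j hij
    simp only [id] at hij
    have hi0 : i ≠ 0 := by
      intro h; subst h; exact absurd hij (by simp [Fin.not_lt, Fin.zero_le])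
    have hval : ((σ⁻¹ i : Fin (2 * l + 1)) : ℕ) = (i : ℕ) - 1 := by
      rw [hinv i, Fin.coe_sub_one, if_neg hi0]
    have hi1 : 1 ≤ (i : ℕ) := Nat.one_le_iff_ne_zero.2 (by
      intro h; exact hi0 (Fin.ext h))
    simp only [Matrix.submatrix_apply, id, mat, hval]
    have hcond : (i : ℕ) - 1 + 1 < 2 * l + 1 := by omega
    rw [if_pos hcond, if_neg]
    have : (j : ℕ) < (i : ℕ) := hij
    omega
  have hdetA : ((mat l a x).submatrix (⇑σ⁻¹) id).det
      = -((a + (∑ m, x m) - x 0) / (x 0) ^ 2) := by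
    rw [Matrix.det_of_upperTriangular htri]
    rw [Fin.prod_univ_succ]
    have h0 : ((mat l a x).submatrix (⇑σ⁻¹) id) 0 0
        = -((a + (∑ m, x m) - x 0) / (x 0) ^ 2) := by
      have hval : ((σ⁻¹ (0 : Fin (2 * l + 1)) : Fin (2 * l + 1)) : ℕ) = 2 * l := by
        rw [hinv 0, Fin.coe_sub_one, if_pos rfl]
      simp only [Matrix.submatrix_apply, id, mat, hval]
      rw [if_neg (by omega), if_pos (by norm_num)]
    rw [h0]
    have h1 : ∀ i : Fin (2 * l), ((mat l a x).submatrix (⇑σ⁻¹) id) i.succ i.succ = 1 := by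
      intro i
      have hne : (i.succ : Fin (2 * l + 1)) ≠ 0 := Fin.succ_ne_zero i
      have hval : ((σ⁻¹ (i.succ : Fin (2 * l + 1)) : Fin (2 * l + 1)) : ℕ) = (i : ℕ) := by
        rw [hinv, Fin.coe_sub_one, if_neg hne]
        simp
      simp only [Matrix.submatrix_apply, id, mat, hval]
      rw [if_pos (by omega), if_pos (by simp)]
    simp only [Matrix.submatrix_apply, id, Equiv.Perm.inv_def] at h1
    simp [h1]
  rw [hA, hsign] at hdetA
  simpa using hdetA


lemma zero_eq (l : ℕ) : (⟨0, Nat.succ_pos _⟩ : Fin (2 * l + 1)) = 0 := by ext; simp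

section
variable (l : ℕ) (hl : 1 ≤ l) (a : ℝ) (ha : 0 ≤ a)
variable (F : (Fin (2 * l + 1) → ℝ) → (Fin (2 * l + 1) → ℝ))
variable (hF : ∀ x : Fin (2 * l + 1) → ℝ, ∀ i : Fin (2 * l + 1),
      F x i = if h : (i : ℕ) + 1 < 2 * l + 1 then x ⟨(i : ℕ) + 1, h⟩
              else (a + (∑ j, x j) - x ⟨0, Nat.succ_pos _⟩) / x ⟨0, Nat.succ_pos _⟩)

include hl ha in
/-- numerator is positive on the positive orthant -/
lemma num_pos (x : Fin (2 * l + 1) → ℝ) (hx : ∀ i, 0 < x i) :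
    0 < a + (∑ m, x m) - x 0 := by
  have hs : (∑ m, x m) = x 0 + ∑ m : Fin (2 * l), x m.succ := Fin.sum_univ_succ x
  have hpos : 0 < ∑ m : Fin (2 * l), x m.succ := by
    haveI : Nonempty (Fin (2 * l)) := Fin.pos_iff_nonempty.mp (by omega)
    exact Finset.sum_pos (fun m _ => hx m.succ) Finset.univ_nonempty
  rw [hs]; linarith

include hl ha hF in
lemma F_pos (x : Fin (2 * l + 1) → ℝ) (hx : ∀ i, 0 < x i) :
    ∀ i, 0 < F x i := by
  intro i
  rw [hF x i]
  by_cases h : (i : ℕ) + 1 < 2 * l + 1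
  · rw [dif_pos h]; exact hx _
  · rw [dif_neg h, zero_eq]
    exact div_pos (num_pos l hl a ha x hx) (hx 0)

include hF in
lemma prod_F (x : Fin (2 * l + 1) → ℝ) (hx : ∀ i, 0 < x i) :
    (∏ i, F x i) = (∏ i, x i) * (a + (∑ m, x m) - x 0) / (x 0) ^ 2 := by
  have h1 : (∏ i, F x i) = (∏ i : Fin (2 * l), F x i.castSucc) * F x (Fin.last (2 * l)) :=
    Fin.prod_univ_castSucc _
  have h2 : ∀ i : Fin (2 * l), F x i.castSucc = x i.succ := by
    intro i
    rw [hF x i.castSucc, dif_pos (by simp only [Fin.coe_castSucc]; omega)]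
    congr 1
  have h3 : F x (Fin.last (2 * l)) = (a + (∑ m, x m) - x 0) / x 0 := by
    rw [hF x (Fin.last (2 * l)), dif_neg (by simp), zero_eq]
  have h4 : (∏ i, x i) = x 0 * ∏ i : Fin (2 * l), x i.succ := Fin.prod_univ_succ x
  rw [h1, Finset.prod_congr rfl fun i _ => h2 i, h3, h4]
  have hx0 : x 0 ≠ 0 := ne_of_gt (hx 0)
  field_simp

include hl ha hF in
lemma inj_F (s : Set (Fin (2 * l + 1) → ℝ)) (hsQ : ∀ x ∈ s, ∀ i, 0 < x i) :
    Set.InjOn F s := by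
  intro x hx y hy hxy
  have htail : ∀ i : Fin (2 * l), x i.succ = y i.succ := by
    intro i
    have hc : (i.castSucc : ℕ) + 1 < 2 * l + 1 := by
      have := i.isLt; simp only [Fin.coe_castSucc]; omega
    have h1 := congrFun hxy i.castSucc
    rw [hF x i.castSucc, hF y i.castSucc, dif_pos hc, dif_pos hc] at h1
    have he : (⟨(i.castSucc : ℕ) + 1, hc⟩ : Fin (2 * l + 1)) = i.succ := by ext; simp
    rwa [he] at h1
  have hsum : (∑ m, x m) - x 0 = (∑ m, y m) - y 0 := by
    rw [Fin.sum_univ_succ x, Fin.sum_univ_succ y]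
    simp only [add_sub_cancel_left]
    exact Finset.sum_congr rfl fun i _ => htail i
  have hlast := congrFun hxy (Fin.last (2 * l))
  rw [hF x (Fin.last (2 * l)), hF y (Fin.last (2 * l)), dif_neg (by simp),
    dif_neg (by simp), zero_eq] at hlast
  have hnum : 0 < a + (∑ m, x m) - x 0 := num_pos l hl a ha x (hsQ x hx)
  have hx0 : 0 < x 0 := hsQ x hx 0
  have hy0 : 0 < y 0 := hsQ y hy 0
  have hxy0 : x 0 = y 0 := by
    have hnum' : a + (∑ m, y m) - y 0 = a + (∑ m, x m) - x 0 := by linarith [hsum]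
    rw [hnum'] at hlast
    rw [div_eq_div_iff (ne_of_gt hx0) (ne_of_gt hy0)] at hlast
    exact (mul_left_cancel₀ (ne_of_gt hnum) hlast).symm
  funext j
  induction j using Fin.cases with
  | zero => exact hxy0
  | succ i => exact htail i

include hl ha hF in
lemma step (s : Set (Fin (2 * l + 1) → ℝ)) (hs : MeasurableSet s)
    (hsQ : ∀ x ∈ s, ∀ i, 0 < x i) :
    (∫⁻ x in F '' s, ENNReal.ofReal (∏ i, x i)⁻¹ ∂volume
        = ∫⁻ x in s, ENNReal.ofReal (∏ i, x i)⁻¹ ∂volume)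
      ∧ MeasurableSet (F '' s) := by
  have hf' : ∀ x ∈ s, HasFDerivWithinAt F (Fd l a x) s x := fun x hx =>
    (hasFDerivAt_F l a F hF x (ne_of_gt (hsQ x hx 0))).hasFDerivWithinAt
  have hinj := inj_F l hl a ha F hF s hsQ
  constructor
  · rw [lintegral_image_eq_lintegral_abs_det_fderiv_mul volume hs hf' hinj]
    apply setLIntegral_congr_fun hs
    intro x hx
    dsimp only
    have hx0 : 0 < x 0 := hsQ x hx 0
    have hnum : 0 < a + (∑ m, x m) - x 0 := num_pos l hl a ha x (hsQ x hx)
    have hprodx : 0 < ∏ i, x i := Finset.prod_pos fun i _ => hsQ x hx i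
    have hdet : (Fd l a x).det = -((a + (∑ m, x m) - x 0) / (x 0) ^ 2) := by
      rw [Fd_det, mat_det]
    rw [hdet, prod_F l a F hF x (hsQ x hx)]
    rw [abs_neg, abs_of_pos (by positivity)]
    rw [← ENNReal.ofReal_mul (by positivity)]
    congr 1
    rw [inv_div]
    field_simp
  · exact measurable_image_of_fderivWithin hs hf' hinj

end
end Lyness13

open Lyness13 in
/-- for odd `k = 2ℓ+1`, the measure `m₂(B) = ∫_B dx/(x₁⋯x_k)` is
invariant under `F∘F` on the positive orthant. -/
theorem lyness_m2_invariant (l : ℕ) (hl : 1 ≤ l) (a : ℝ) (ha : 0 ≤ a)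
    (F : (Fin (2 * l + 1) → ℝ) → (Fin (2 * l + 1) → ℝ))
    (hF : ∀ x : Fin (2 * l + 1) → ℝ, ∀ i : Fin (2 * l + 1),
      F x i = if h : (i : ℕ) + 1 < 2 * l + 1 then x ⟨(i : ℕ) + 1, h⟩
              else (a + (∑ j, x j) - x ⟨0, by omega⟩) / x ⟨0, by omega⟩)
    (B : Set (Fin (2 * l + 1) → ℝ)) (hB : MeasurableSet B)
    (hBQ : ∀ x ∈ B, ∀ i, 0 < x i) :
    ∫⁻ x in (F ∘ F) '' B, ENNReal.ofReal (∏ i, x i)⁻¹ ∂volume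
      = ∫⁻ x in B, ENNReal.ofReal (∏ i, x i)⁻¹ ∂volume := by
  obtain ⟨h1, hm1⟩ := step l hl a ha F hF B hB hBQ
  have hFBQ : ∀ x ∈ F '' B, ∀ i, 0 < x i := by
    rintro _ ⟨x, hx, rfl⟩ i
    exact F_pos l hl a ha F hF x (hBQ x hx) i
  obtain ⟨h2, _⟩ := step l hl a ha F hF (F '' B) hm1 hFBQ
  rw [Set.image_comp, h2, h1]
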